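/- For ℤ×ℤ-graded R-modules M and N, there is a unique R-linear map τ_{M,N} : M⊗_R N → N⊗_R M satisfying τ_{M,N}(m⊗n) = λ(deg m, deg n)·(n⊗m) for all homogeneous m ∈ M and n ∈ N; moreover τ_{M,N} is an isomorphism, with τ_{N,M} ∘ τ_{M,N} = id_{M⊗N}. -/

import Mathlib

open scoped TensorProduct

noncomputable section Chrono

/-- The abelian group (ℤ/2)×(ℤ/2)×ℤ. -/
abbrev GG : Type := ZMod 2 × ZMod 2 × ℤ

/-- The ring R = ℤ[X,Y,Z,Z⁻¹]/(X²−1, Y²−1), realized as the group algebra over ℤ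
of the abelian group (ℤ/2)×(ℤ/2)×ℤ. -/
abbrev RR : Type := AddMonoidAlgebra ℤ GG

/-- The unit of `RR` corresponding to a group element of `GG`. -/
def gunit (g : GG) : RRˣ where
  val := AddMonoidAlgebra.single g 1
  inv := AddMonoidAlgebra.single (-g) 1
  val_inv := by simp [AddMonoidAlgebra.single_mul_single, AddMonoidAlgebra.one_def]
  inv_val := by simp [AddMonoidAlgebra.single_mul_single, AddMonoidAlgebra.one_def]

/-- The unit X of R (image of the first generator). -/
def Xu : RRˣ := gunit (1, 0, 0)
/-- The unit Y of R (image of the second generator). -/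
def Yu : RRˣ := gunit (0, 1, 0)
/-- The unit Z of R (image of the third generator). -/
def Zu : RRˣ := gunit (0, 0, 1)

def X : RR := Xu
def Y : RR := Yu
def Z : RR := Zu

/-- ℤ_π = ℤ[π]/(π²−1). -/
abbrev Zpi : Type := Polynomial ℤ ⧸ Ideal.span {(Polynomial.X : Polynomial ℤ) ^ 2 - 1}

/-- The class of π in ℤ_π. -/
def piE : Zpi := Ideal.Quotient.mk _ Polynomial.X

/-- The homogeneous component of degree `(a,b) ∈ (ℤ/2)×ℤ` of the splitting-degree grading
of `RR`: the ℤ-submodule spanned by the monomials `X^p Y^q Z^r` with `p+q ≡ a (mod 2)`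
and `r = -b`. -/
def Rcomp (d : ZMod 2 × ℤ) : Submodule ℤ RR :=
  Submodule.span ℤ {m : RR | ∃ p q r : ℤ,
    ((p + q : ℤ) : ZMod 2) = d.1 ∧ r = -d.2 ∧ m = ((Xu ^ p * Yu ^ q * Zu ^ r : RRˣ) : RR)}

/-- λ((a,b),(a',b')) = X^{aa'} · Y^{bb'} · Z^{ab'−a'b} ∈ Rˣ. -/
def lam (d e : ℤ × ℤ) : RRˣ :=
  Xu ^ (d.1 * e.1) * Yu ^ (d.2 * e.2) * Zu ^ (d.1 * e.2 - e.1 * d.2)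

/-- The free `RR`-module A with basis `v₊ = (1,0)`, `v₋ = (0,1)`. -/
abbrev A : Type := RR × RR

/-- The basis element v₊ of A. -/
def vp : A := (1, 0)
/-- The basis element v₋ of A. -/
def vm : A := (0, 1)

/-- Multiplication μ : A ⊗ A → A, determined by μ(v₊⊗v₊)=v₊, μ(v₊⊗v₋)=v₋,
μ(v₋⊗v₊)=XZ·v₋, μ(v₋⊗v₋)=0. -/
def mu : A ⊗[RR] A →ₗ[RR] A :=
  TensorProduct.lift <| LinearMap.mk₂ RR
    (fun u v => (u.1 * v.1, u.1 * v.2 + (X * Z) * (u.2 * v.1)))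
    (by intros; simp [Prod.ext_iff]; constructor <;> ring)
    (by intros; simp [Prod.ext_iff, smul_eq_mul]; constructor <;> ring)
    (by intros; simp [Prod.ext_iff]; constructor <;> ring)
    (by intros; simp [Prod.ext_iff, smul_eq_mul]; constructor <;> ring)

/-- Comultiplication Δ : A → A ⊗ A, with Δ(v₊) = v₋⊗v₊ + YZ·(v₊⊗v₋) and Δ(v₋) = v₋⊗v₋. -/
def Delta : A →ₗ[RR] A ⊗[RR] A :=
  (LinearMap.fst RR RR RR).smulRight (vm ⊗ₜ[RR] vp + (Y * Z) • (vp ⊗ₜ[RR] vm)) +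
  (LinearMap.snd RR RR RR).smulRight (vm ⊗ₜ[RR] vm)

/-- Counit ε : A → R, ε(v₊)=0, ε(v₋)=1. -/
def eps : A →ₗ[RR] RR := LinearMap.snd RR RR RR

/-- Unit η : R → A, η(1)=v₊. -/
def eta : RR →ₗ[RR] A := (LinearMap.id : RR →ₗ[RR] RR).smulRight vp

/-- The dual basis element v₊* of A* = Hom_R(A,R). -/
def vpd : Module.Dual RR A := LinearMap.fst RR RR RR
/-- The dual basis element v₋* of A* = Hom_R(A,R). -/
def vmd : Module.Dual RR A := LinearMap.snd RR RR RR

/-- The element f ⊗ g of (A⊗A)* under the identification (A⊗A)* ≅ A*⊗A*,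
given by ⟨f⊗g, m⊗n⟩ = f(m)·g(n). -/
def pairF (f g : Module.Dual RR A) : A ⊗[RR] A →ₗ[RR] RR :=
  TensorProduct.lift <| LinearMap.mk₂ RR (fun m n => f m * g n)
    (by intros; simp [add_mul])
    (by intros; simp [smul_eq_mul]; ring)
    (by intros; simp [mul_add])
    (by intros; simp [smul_eq_mul]; ring)
/-- The defining property of the symmetry τ_{M,N} : M⊗N → N⊗M,
τ(m⊗n) = λ(deg m, deg n)·(n⊗m) on homogeneous elements. -/
def IsSymmetryMap {M N : Type}
    [AddCommGroup M] [Module RR M] [AddCommGroup N] [Module RR N]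
    (𝓜 : ℤ × ℤ → Submodule RR M) (𝓝 : ℤ × ℤ → Submodule RR N)
    (τ : M ⊗[RR] N →ₗ[RR] N ⊗[RR] M) : Prop :=
  ∀ d e : ℤ × ℤ, ∀ m ∈ 𝓜 d, ∀ n ∈ 𝓝 e,
    τ (m ⊗ₜ[RR] n) = ((lam d e : RRˣ) : RR) • (n ⊗ₜ[RR] m)

open scoped DirectSum

/-! ### Auxiliary lemmas for `stmt8` -/

/-- `gunit` as a monoid hom from `Multiplicative GG`. -/
def gHom : Multiplicative GG →* RRˣ where
  toFun g := gunit (Multiplicative.toAdd g)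
  map_one' := by ext; simp [gunit, AddMonoidAlgebra.one_def]
  map_mul' g h := by
    ext
    simp [gunit, AddMonoidAlgebra.single_mul_single, Units.val_mul]

lemma gunit_mul (g h : GG) : gunit g * gunit h = gunit (g + h) :=
  (gHom.map_mul (Multiplicative.ofAdd g) (Multiplicative.ofAdd h)).symm

lemma gunit_zero : gunit (0 : GG) = 1 := gHom.map_one

lemma gunit_zpow (g : GG) (k : ℤ) : gunit g ^ k = gunit (k • g) := by
  have := gHom.map_zpow (Multiplicative.ofAdd g) k
  simpa [gHom, ← ofAdd_zsmul] using this.symm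

lemma lam_eq (d e : ℤ × ℤ) :
    lam d e = gunit (((d.1 * e.1 : ℤ) : ZMod 2), ((d.2 * e.2 : ℤ) : ZMod 2),
      d.1 * e.2 - e.1 * d.2) := by
  unfold lam Xu Yu Zu
  rw [gunit_zpow, gunit_zpow, gunit_zpow, gunit_mul, gunit_mul]
  congr 1
  simp [Prod.ext_iff, zsmul_eq_mul]

lemma lam_mul_lam (d e : ℤ × ℤ) : lam d e * lam e d = 1 := by
  rw [lam_eq, lam_eq, gunit_mul, ← gunit_zero]
  congr 1
  refine Prod.ext ?_ (Prod.ext ?_ ?_) <;> simp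
  · rw [mul_comm ((e.1 : ZMod 2)) ((d.1 : ZMod 2))]
    exact CharTwo.add_self_eq_zero _
  · rw [mul_comm ((e.2 : ZMod 2)) ((d.2 : ZMod 2))]
    exact CharTwo.add_self_eq_zero _

/-- Bilinear core of the symmetry map on direct sums. -/
def tauAux {M N : Type} [AddCommGroup M] [Module RR M] [AddCommGroup N] [Module RR N]
    (𝓜 : ℤ × ℤ → Submodule RR M) (𝓝 : ℤ × ℤ → Submodule RR N) :
    (⨁ d, 𝓜 d) →ₗ[RR] (⨁ e, 𝓝 e) →ₗ[RR] N ⊗[RR] M :=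
  DirectSum.toModule RR _ _ fun d =>
    LinearMap.flip <| DirectSum.toModule RR _ _ fun e =>
      LinearMap.mk₂ RR
        (fun (n : 𝓝 e) (m : 𝓜 d) => ((lam d e : RRˣ) : RR) • ((n : N) ⊗ₜ[RR] (m : M)))
        (by intros; simp [TensorProduct.add_tmul, smul_add])
        (by intros; rw [Submodule.coe_smul, TensorProduct.smul_tmul', smul_smul, smul_smul, mul_comm, TensorProduct.smul_tmul'])
        (by intros; simp [TensorProduct.tmul_add, smul_add])
        (by intros; rw [Submodule.coe_smul, TensorProduct.tmul_smul, smul_smul, smul_smul, mul_comm])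

lemma tauAux_lof {M N : Type} [AddCommGroup M] [Module RR M] [AddCommGroup N] [Module RR N]
    (𝓜 : ℤ × ℤ → Submodule RR M) (𝓝 : ℤ × ℤ → Submodule RR N)
    (d e : ℤ × ℤ) (m : 𝓜 d) (n : 𝓝 e) :
    tauAux 𝓜 𝓝 (DirectSum.lof RR _ (fun d => 𝓜 d) d m)
        (DirectSum.lof RR _ (fun e => 𝓝 e) e n)
      = ((lam d e : RRˣ) : RR) • ((n : N) ⊗ₜ[RR] (m : M)) := by
  unfold tauAux
  rw [DirectSum.toModule_lof, LinearMap.flip_apply, DirectSum.toModule_lof]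
  rfl

section Main
variable {M N : Type} [AddCommGroup M] [Module RR M] [AddCommGroup N] [Module RR N]
  (𝓜 : ℤ × ℤ → Submodule RR M) (𝓝 : ℤ × ℤ → Submodule RR N)

lemma exists_symmetry (hM : DirectSum.IsInternal 𝓜) (hN : DirectSum.IsInternal 𝓝) :
    ∃ τ : M ⊗[RR] N →ₗ[RR] N ⊗[RR] M, IsSymmetryMap 𝓜 𝓝 τ := by
  set eM := LinearEquiv.ofBijective (DirectSum.coeLinearMap 𝓜) hM with heM
  set eN := LinearEquiv.ofBijective (DirectSum.coeLinearMap 𝓝) hN with heN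
  refine ⟨TensorProduct.lift (((tauAux 𝓜 𝓝).comp eM.symm.toLinearMap).compl₂
    eN.symm.toLinearMap), ?_⟩
  intro d e m hm n hn
  have hm' : eM.symm m = DirectSum.lof RR _ (fun d => 𝓜 d) d ⟨m, hm⟩ := by
    rw [LinearEquiv.symm_apply_eq, heM]
    simp [LinearEquiv.ofBijective_apply, DirectSum.lof_eq_of, DirectSum.coeLinearMap_of]
    exact (DirectSum.coeLinearMap_of 𝓜 d ⟨m, hm⟩).symm
  have hn' : eN.symm n = DirectSum.lof RR _ (fun e => 𝓝 e) e ⟨n, hn⟩ := by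
    rw [LinearEquiv.symm_apply_eq, heN]
    simp [LinearEquiv.ofBijective_apply, DirectSum.lof_eq_of, DirectSum.coeLinearMap_of]
    exact (DirectSum.coeLinearMap_of 𝓝 e ⟨n, hn⟩).symm
  simp only [TensorProduct.lift.tmul, LinearMap.compl₂_apply, LinearMap.comp_apply,
    LinearEquiv.coe_coe, hm', hn', tauAux_lof]

lemma symmetry_ext (hM : DirectSum.IsInternal 𝓜) (hN : DirectSum.IsInternal 𝓝)
    {T : Type} [AddCommGroup T] [Module RR T]
    (f g : M ⊗[RR] N →ₗ[RR] T)
    (h : ∀ d e : ℤ × ℤ, ∀ m ∈ 𝓜 d, ∀ n ∈ 𝓝 e, f (m ⊗ₜ[RR] n) = g (m ⊗ₜ[RR] n)) :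
    f = g := by
  apply TensorProduct.ext'
  intro m n
  have hm : m ∈ ⨆ d, 𝓜 d := by rw [hM.submodule_iSup_eq_top]; trivial
  induction hm using Submodule.iSup_induction' with
  | mem d m hm =>
    have hn : n ∈ ⨆ e, 𝓝 e := by rw [hN.submodule_iSup_eq_top]; trivial
    induction hn using Submodule.iSup_induction' with
    | mem e n hn => exact h d e m hm n hn
    | zero => simp
    | add n₁ n₂ _ _ h₁ h₂ => simp [TensorProduct.tmul_add, h₁, h₂]
  | zero => simp
  | add m₁ m₂ _ _ h₁ h₂ => simp [TensorProduct.add_tmul, h₁, h₂]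

lemma symmetry_comp (hM : DirectSum.IsInternal 𝓜) (hN : DirectSum.IsInternal 𝓝)
    (τ : M ⊗[RR] N →ₗ[RR] N ⊗[RR] M) (τ' : N ⊗[RR] M →ₗ[RR] M ⊗[RR] N)
    (hτ : IsSymmetryMap 𝓜 𝓝 τ) (hτ' : IsSymmetryMap 𝓝 𝓜 τ') :
    τ'.comp τ = LinearMap.id := by
  apply symmetry_ext 𝓜 𝓝 hM hN
  intro d e m hm n hn
  rw [LinearMap.comp_apply, hτ d e m hm n hn, map_smul, hτ' e d n hn m hm,
    smul_smul, ← Units.val_mul, lam_mul_lam]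
  simp

end Main

/-- For ℤ×ℤ-graded R-modules M and N there is a unique R-linear map
τ_{M,N} : M⊗N → N⊗M with τ(m⊗n) = λ(deg m, deg n)·(n⊗m) for homogeneous m, n;
moreover τ_{M,N} is an isomorphism, with τ_{N,M} ∘ τ_{M,N} = id. -/
theorem stmt8 {M N : Type}
    [AddCommGroup M] [Module RR M] [AddCommGroup N] [Module RR N]
    (𝓜 : ℤ × ℤ → Submodule RR M) (𝓝 : ℤ × ℤ → Submodule RR N)
    (hM : DirectSum.IsInternal 𝓜) (hN : DirectSum.IsInternal 𝓝) :
    (∃! τ : M ⊗[RR] N →ₗ[RR] N ⊗[RR] M, IsSymmetryMap 𝓜 𝓝 τ) ∧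
    ∀ (τ : M ⊗[RR] N →ₗ[RR] N ⊗[RR] M) (τ' : N ⊗[RR] M →ₗ[RR] M ⊗[RR] N),
      IsSymmetryMap 𝓜 𝓝 τ → IsSymmetryMap 𝓝 𝓜 τ' →
      Function.Bijective τ ∧ τ'.comp τ = LinearMap.id := by
  obtain ⟨τ₀, hτ₀⟩ := exists_symmetry 𝓜 𝓝 hM hN
  obtain ⟨σ₀, hσ₀⟩ := exists_symmetry 𝓝 𝓜 hN hM
  refine ⟨⟨τ₀, hτ₀, fun τ hτ => ?_⟩, fun τ τ' hτ hτ' => ?_⟩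
  · exact symmetry_ext 𝓜 𝓝 hM hN τ τ₀
      (fun d e m hm n hn => by rw [hτ d e m hm n hn, hτ₀ d e m hm n hn])
  · refine ⟨?_, symmetry_comp 𝓜 𝓝 hM hN τ τ' hτ hτ'⟩
    have h1 := symmetry_comp 𝓜 𝓝 hM hN τ σ₀ hτ hσ₀
    have h2 := symmetry_comp 𝓝 𝓜 hN hM σ₀ τ hσ₀ hτ
    exact Function.bijective_iff_has_inverse.mpr ⟨σ₀,
      fun x => by simpa using congrArg (fun f => f x) h1,
      fun x => by simpa using congrArg (fun f => f x) h2⟩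

end Chrono
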